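/- Let α be a positive transcendental real number and let β be a positive real number. Then there exists an additive subgroup G of ℝ² which contains (1,1), is dense in ℝ², and satisfies I(G) = { [[α^n,0],[0,β^n]] : n ∈ ℤ }. -/

import Mathlib

set_option maxHeartbeats 1000000
set_option synthInstance.maxHeartbeats 400000

open Polynomial

/-- For an additive subgroup `G` of `ℝ²` (elements viewed as row vectors), `IG G` is the
set of invertible real `2 × 2` matrices `B` of the form `[[a,0],[0,b]]` or `[[0,a],[b,0]]`
with `a > 0`, `b > 0`, such that right multiplication by `B` maps `G` onto `G`. -/
def IG (G : AddSubgroup (Fin 2 → ℝ)) : Set (Matrix (Fin 2) (Fin 2) ℝ) :=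
  {B | IsUnit B ∧
    (∃ a b : ℝ, 0 < a ∧ 0 < b ∧
      (B = Matrix.of ![![a, 0], ![0, b]] ∨ B = Matrix.of ![![0, a], ![b, 0]])) ∧
    (fun v => Matrix.vecMul v B) '' (G : Set (Fin 2 → ℝ)) = (G : Set (Fin 2 → ℝ))}

/-! ### Auxiliary material -/

instance : Countable (MvPolynomial (Fin 2) ℤ) :=
  show Countable (AddMonoidAlgebra ℤ (Fin 2 →₀ ℕ)) from AddMonoidAlgebra.coeffEquiv.injective.countable

instance myPolyCountable (R : Type*) [Semiring R] [Countable R] : Countable (Polynomial R) :=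
  have : Countable (AddMonoidAlgebra R ℕ) := AddMonoidAlgebra.coeffEquiv.injective.countable
  Function.Injective.countable (f := Polynomial.toFinsupp)
    (fun p q h => by cases p; cases q; simpa using h)

/-- Over a countable subalgebra of `ℝ` there exists a transcendental real number. -/
lemma exists_trans (R : Subalgebra ℤ ℝ) (hR : (R : Set ℝ).Countable) :
    ∃ θ : ℝ, Transcendental R θ := by
  have : Countable R := hR.to_subtype
  have hcnt : {x : ℝ | IsAlgebraic R x}.Countable := by
    have hsub : {x : ℝ | IsAlgebraic R x} ⊆
        ⋃ p : {p : Polynomial R // p ≠ 0},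
          {x : ℝ | eval x ((p : Polynomial R).map (algebraMap R ℝ)) = 0} := by
      rintro x ⟨p, hp, hpx⟩
      exact Set.mem_iUnion.2 ⟨⟨p, hp⟩, by simpa [eval_map, ← aeval_def] using hpx⟩
    refine Set.Countable.mono hsub (Set.countable_iUnion fun p => ?_)
    refine Set.Finite.countable (finite_setOf_isRoot ?_)
    exact (Polynomial.map_ne_zero_iff (f := algebraMap R ℝ) Subtype.val_injective).2 p.2
  have hne : {x : ℝ | IsAlgebraic R x} ≠ Set.univ := by
    intro h
    exact Cardinal.not_countable_real (h ▸ hcnt)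
  obtain ⟨θ, hθ⟩ := Set.ne_univ_iff_exists_notMem _ |>.1 hne
  exact ⟨θ, hθ⟩

/-- Linear independence of `1, θ, θ², θ³, θ⁴` over a subalgebra `R` of `ℝ`, for `θ`
transcendental over `R`. -/
lemma indep5 (R : Subalgebra ℤ ℝ) (θ : ℝ) (hθ : Transcendental R θ)
    (c0 c1 c2 c3 c4 : ℝ) (h0 : c0 ∈ R) (h1 : c1 ∈ R) (h2 : c2 ∈ R) (h3 : c3 ∈ R) (h4 : c4 ∈ R)
    (heq : c0 + c1 * θ + c2 * θ ^ 2 + c3 * θ ^ 3 + c4 * θ ^ 4 = 0) :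
    c0 = 0 ∧ c1 = 0 ∧ c2 = 0 ∧ c3 = 0 ∧ c4 = 0 := by
  set p : Polynomial R := C ⟨c0, h0⟩ + C ⟨c1, h1⟩ * X + C ⟨c2, h2⟩ * X ^ 2
      + C ⟨c3, h3⟩ * X ^ 3 + C ⟨c4, h4⟩ * X ^ 4 with hp
  have hev : aeval θ p = 0 := by
    simp only [hp, map_add, map_mul, map_pow, aeval_C, aeval_X]
    show (c0 : ℝ) + c1 * θ + c2 * θ ^ 2 + c3 * θ ^ 3 + c4 * θ ^ 4 = 0
    exact heq
  have hp0 : p = 0 := by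
    by_contra h
    exact hθ ⟨p, h, hev⟩
  have hc := fun n => congrArg (fun q => coeff q n) hp0
  simp only [hp, coeff_add, coeff_C_mul, coeff_X_pow, coeff_C, coeff_X, coeff_zero] at hc
  have e0 := hc 0; have e1 := hc 1; have e2 := hc 2; have e3 := hc 3; have e4 := hc 4
  norm_num at e0 e1 e2 e3 e4
  exact ⟨congrArg Subtype.val e0, congrArg Subtype.val e1, congrArg Subtype.val e2,
    congrArg Subtype.val e3, congrArg Subtype.val e4⟩

/-- If a product of integer polynomials is a power of `X`, both factors are `± X ^ i`. -/
lemma mul_eq_X_pow (p q : Polynomial ℤ) (k : ℕ) (h : p * q = X ^ k) :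
    ∃ s : ℕ, s ≤ k ∧ ((p = X ^ s ∧ q = X ^ (k - s)) ∨ (p = -X ^ s ∧ q = -X ^ (k - s))) := by
  have hdvd : p ∣ X ^ k := ⟨q, h.symm⟩
  obtain ⟨s, hs, hassoc⟩ := (dvd_prime_pow prime_X k).1 hdvd
  obtain ⟨u, hu⟩ := hassoc.symm
  obtain ⟨r, hr, hrC⟩ := isUnit_iff.1 u.isUnit
  rcases Int.isUnit_iff.1 hr with h1 | h1
  · refine ⟨s, hs, Or.inl ⟨?_, ?_⟩⟩
    · rw [← hu, ← hrC, h1]; simp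
    · have hp : p = X ^ s := by rw [← hu, ← hrC, h1]; simp
      subst hp
      have hx : (X : Polynomial ℤ) ^ s ≠ 0 := pow_ne_zero _ X_ne_zero
      have h2 : (X : Polynomial ℤ) ^ s * q = X ^ s * X ^ (k - s) := by
        rw [h, ← pow_add, Nat.add_sub_cancel' hs]
      exact mul_left_cancel₀ hx h2
  · refine ⟨s, hs, Or.inr ⟨?_, ?_⟩⟩
    · rw [← hu, ← hrC, h1]; simp [mul_comm]
    · have hp : p = -X ^ s := by rw [← hu, ← hrC, h1]; simp [mul_comm]
      subst hp
      have hx : (X : Polynomial ℤ) ^ s ≠ 0 := pow_ne_zero _ X_ne_zero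
      have h2 : (X : Polynomial ℤ) ^ s * q = X ^ s * (-X ^ (k - s)) := by
        have h' := h; rw [neg_mul] at h'
        have h2' : X ^ s * q = -(X ^ k) := by linear_combination -h'
        rw [h2']
        have h3 : (X : Polynomial ℤ) ^ k = X ^ s * X ^ (k - s) := by
          rw [← pow_add, Nat.add_sub_cancel' hs]
        rw [h3]; ring
      exact mul_left_cancel₀ hx h2

lemma int_aeval_eq_zero {α : ℝ} (htr : Transcendental ℚ α) (p : Polynomial ℤ)
    (h : aeval α p = 0) : p = 0 := by
  by_contra hp
  refine htr ⟨p.map (algebraMap ℤ ℚ), ?_, ?_⟩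
  · exact (Polynomial.map_ne_zero_iff (algebraMap ℤ ℚ).injective_int).2 hp
  · rw [aeval_map_algebraMap, h]

lemma int_aeval_inj {α : ℝ} (htr : Transcendental ℚ α) {p q : Polynomial ℤ}
    (h : aeval α p = aeval α q) : p = q :=
  sub_eq_zero.1 (int_aeval_eq_zero htr (p - q) (by rw [map_sub, h, sub_self]))

lemma dense_int_add (ξ : ℝ) (hξ : Irrational ξ) :
    Dense ((AddSubgroup.closure {1, ξ} : AddSubgroup ℝ) : Set ℝ) := by
  rcases AddSubgroup.dense_or_cyclic (AddSubgroup.closure {1, ξ}) with h | ⟨a, ha⟩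
  · exact h
  · exfalso
    have h1 : (1 : ℝ) ∈ AddSubgroup.closure ({1, ξ} : Set ℝ) :=
      AddSubgroup.subset_closure (by simp)
    have h2 : ξ ∈ AddSubgroup.closure ({1, ξ} : Set ℝ) :=
      AddSubgroup.subset_closure (by simp)
    rw [ha, AddSubgroup.mem_closure_singleton] at h1 h2
    obtain ⟨n, hn⟩ := h1
    obtain ⟨m, hm⟩ := h2
    have hn0 : (n : ℝ) ≠ 0 := by
      intro h; rw [zsmul_eq_mul, h, zero_mul] at hn; norm_num at hn
    refine hξ ⟨(m : ℚ) / (n : ℚ), ?_⟩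
    have ha' : a = 1 / n := by
      rw [zsmul_eq_mul] at hn; field_simp; linarith
    rw [zsmul_eq_mul, ha'] at hm
    push_cast
    rw [← hm]; field_simp

lemma approx_int_add (ξ : ℝ) (hξ : Irrational ξ) (x ε : ℝ) (hε : 0 < ε) :
    ∃ m n : ℤ, |x - ((m : ℝ) + n * ξ)| < ε := by
  have hd := dense_int_add ξ hξ
  have hx := hd x
  rw [Metric.mem_closure_iff] at hx
  obtain ⟨y, hy, hdist⟩ := hx ε hε
  rw [SetLike.mem_coe, AddSubgroup.mem_closure_pair] at hy
  obtain ⟨m, n, hmn⟩ := hy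
  refine ⟨m, n, ?_⟩
  have : (m : ℝ) + n * ξ = y := by rw [← hmn]; push_cast [zsmul_eq_mul]; ring
  rw [this, ← Real.dist_eq]
  exact hdist

/-- The coupling predicate defining the group `G`. -/
def Pred (α β θ : ℝ) (x y : ℝ) : Prop :=
  ∃ p q r : Polynomial ℤ, ∃ N : ℕ,
    x * α ^ N = aeval α p + θ * aeval α q ∧ y * β ^ N = aeval β p + θ ^ 2 * aeval β r

lemma Pred_zero (α β θ : ℝ) : Pred α β θ 0 0 :=
  ⟨0, 0, 0, 0, by simp, by simp⟩

lemma Pred_one (α β θ : ℝ) : Pred α β θ 1 1 :=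
  ⟨1, 0, 0, 0, by simp, by simp⟩

lemma Pred_theta (α β θ : ℝ) : Pred α β θ θ 0 :=
  ⟨0, 1, 0, 0, by simp, by simp⟩

lemma Pred_add (α β θ : ℝ) (x y x' y' : ℝ) (h : Pred α β θ x y) (h' : Pred α β θ x' y') :
    Pred α β θ (x + x') (y + y') := by
  obtain ⟨p, q, r, N, e1, e2⟩ := h
  obtain ⟨p', q', r', M, f1, f2⟩ := h'
  refine ⟨p * X ^ M + p' * X ^ N, q * X ^ M + q' * X ^ N, r * X ^ M + r' * X ^ N, N + M, ?_, ?_⟩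
  · simp only [map_add, map_mul, map_pow, aeval_X, pow_add]
    linear_combination α ^ M * e1 + α ^ N * f1
  · simp only [map_add, map_mul, map_pow, aeval_X, pow_add]
    linear_combination β ^ M * e2 + β ^ N * f2

lemma Pred_neg (α β θ : ℝ) (x y : ℝ) (h : Pred α β θ x y) : Pred α β θ (-x) (-y) := by
  obtain ⟨p, q, r, N, e1, e2⟩ := h
  refine ⟨-p, -q, -r, N, ?_, ?_⟩
  · simp only [map_neg]; linear_combination -e1
  · simp only [map_neg]; linear_combination -e2

lemma Pred_scale (α β θ : ℝ) (hα : α ≠ 0) (hβ : β ≠ 0) (n : ℤ) (x y : ℝ)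
    (h : Pred α β θ x y) : Pred α β θ (α ^ n * x) (β ^ n * y) := by
  obtain ⟨p, q, r, N, e1, e2⟩ := h
  rcases le_or_gt 0 n with hn | hn
  · lift n to ℕ using hn
    refine ⟨p * X ^ n, q * X ^ n, r * X ^ n, N, ?_, ?_⟩
    · simp only [map_mul, map_pow, aeval_X, zpow_natCast]
      linear_combination α ^ n * e1
    · simp only [map_mul, map_pow, aeval_X, zpow_natCast]
      linear_combination β ^ n * e2
  · set m : ℕ := (-n).toNat with hm
    have hmn : (m : ℤ) = -n := Int.toNat_of_nonneg (by omega)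
    have hzα : α ^ n * α ^ m = 1 := by
      rw [← zpow_natCast α m, ← zpow_add₀ hα, hmn]; simp
    have hzβ : β ^ n * β ^ m = 1 := by
      rw [← zpow_natCast β m, ← zpow_add₀ hβ, hmn]; simp
    refine ⟨p, q, r, N + m, ?_, ?_⟩
    · rw [pow_add]
      calc α ^ n * x * (α ^ N * α ^ m) = (α ^ n * α ^ m) * (x * α ^ N) := by ring
        _ = aeval α p + θ * aeval α q := by rw [hzα, one_mul, e1]
    · rw [pow_add]
      calc β ^ n * y * (β ^ N * β ^ m) = (β ^ n * β ^ m) * (y * β ^ N) := by ring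
        _ = aeval β p + θ ^ 2 * aeval β r := by rw [hzβ, one_mul, e2]

/-- The group `G`. -/
def Gdef (α β θ : ℝ) : AddSubgroup (Fin 2 → ℝ) where
  carrier := {v | Pred α β θ (v 0) (v 1)}
  zero_mem' := by simpa using Pred_zero α β θ
  add_mem' := by
    intro u w hu hw
    simpa using Pred_add α β θ _ _ _ _ hu hw
  neg_mem' := by
    intro u hu
    simpa using Pred_neg α β θ _ _ hu

lemma mem_Gdef (α β θ : ℝ) (v : Fin 2 → ℝ) : v ∈ Gdef α β θ ↔ Pred α β θ (v 0) (v 1) :=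
  Iff.rfl

lemma vecMul_two (v : Fin 2 → ℝ) (M : Matrix (Fin 2) (Fin 2) ℝ) (j : Fin 2) :
    Matrix.vecMul v M j = v 0 * M 0 j + v 1 * M 1 j := by
  simp [Matrix.vecMul, dotProduct, Fin.sum_univ_two]

theorem stmt0 (α β : ℝ) (hα : 0 < α) (htr : Transcendental ℚ α) (hβ : 0 < β) :
    ∃ G : AddSubgroup (Fin 2 → ℝ),
      (![1, 1] : Fin 2 → ℝ) ∈ G ∧
      Dense (G : Set (Fin 2 → ℝ)) ∧
      IG G = {B | ∃ n : ℤ, B = Matrix.of ![![α ^ n, 0], ![0, β ^ n]]} := by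
  classical
  have hαne : α ≠ 0 := ne_of_gt hα
  have hβne : β ≠ 0 := ne_of_gt hβ
  -- the subalgebra R = ℤ[α, β]
  set R : Subalgebra ℤ ℝ := (MvPolynomial.aeval (R := ℤ) ![α, β]).range with hR
  have hRc : (R : Set ℝ).Countable := by
    have h := Set.countable_range (fun q : MvPolynomial (Fin 2) ℤ => MvPolynomial.aeval ![α, β] q)
    have he : (R : Set ℝ) = Set.range (fun q : MvPolynomial (Fin 2) ℤ =>
        MvPolynomial.aeval ![α, β] q) := by
      ext x
      simp [hR, AlgHom.mem_range]
    rw [he]; exact h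
  obtain ⟨θ, hθ⟩ := exists_trans R hRc
  have hαmem : α ∈ R := ⟨MvPolynomial.X 0, by simp⟩
  have hβmem : β ∈ R := ⟨MvPolynomial.X 1, by simp⟩
  have hmem : ∀ (x : ℝ), x ∈ R → ∀ p : Polynomial ℤ, aeval x p ∈ R := by
    intro x hx p
    induction p using Polynomial.induction_on with
    | C a => rw [aeval_C]; exact R.algebraMap_mem a
    | add p q hp hq => rw [map_add]; exact add_mem hp hq
    | monomial n a _ =>
        simp only [map_mul, aeval_C, map_pow, aeval_X]
        exact mul_mem (R.algebraMap_mem a) (pow_mem hx _)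
  have hθne : θ ≠ 0 := by
    intro h
    exact hθ ⟨X, X_ne_zero, by simp [h]⟩
  have hθ2irr : Irrational (θ ^ 2) := by
    intro ⟨c, hc⟩
    have hden : ((c.den : ℤ) : ℝ) ≠ 0 := by
      simp [c.den_nz]
    have heq : (-(c.num : ℝ)) + 0 * θ + ((c.den : ℤ) : ℝ) * θ ^ 2 + 0 * θ ^ 3 + 0 * θ ^ 4 = 0 := by
      have : ((c : ℝ)) = θ ^ 2 := hc
      have hc' : (c.num : ℝ) = c * c.den := by
        rw [Rat.cast_def]; field_simp
      rw [← this]; push_cast; push_cast at hc'; linarith [hc']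
    obtain ⟨-, -, h2, -, -⟩ := indep5 R θ hθ _ _ _ _ _
      (neg_mem (R.intCast_mem c.num)) (zero_mem R) (R.intCast_mem (c.den : ℤ)) (zero_mem R)
      (zero_mem R) heq
    exact hden h2
  have hαirr : Irrational α := htr.irrational
  set G : AddSubgroup (Fin 2 → ℝ) := Gdef α β θ with hGdef
  have hG11 : (![1, 1] : Fin 2 → ℝ) ∈ G := by
    rw [hGdef, mem_Gdef]
    simpa using Pred_one α β θ
  refine ⟨G, hG11, ?_, ?_⟩
  · -- density
    rw [Metric.dense_iff]
    intro v r hr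
    obtain ⟨m, n, hmn⟩ := approx_int_add (θ ^ 2) hθ2irr (v 1) r hr
    have hθabs : 0 < |θ| := abs_pos.2 hθne
    obtain ⟨a', b', hab⟩ := approx_int_add α hαirr ((v 0 - m) / θ) (r / |θ|)
      (div_pos hr hθabs)
    set g : Fin 2 → ℝ := ![(m : ℝ) + θ * ((a' : ℝ) + b' * α), (m : ℝ) + n * θ ^ 2] with hg
    have hgG : g ∈ G := by
      rw [hGdef, mem_Gdef]
      have : Pred α β θ ((m : ℝ) + θ * ((a' : ℝ) + b' * α)) ((m : ℝ) + n * θ ^ 2) := by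
        refine ⟨C m, C a' + C b' * X, C n, 0, ?_, ?_⟩
        · simp
        · simp; ring
      simpa [hg] using this
    refine ⟨g, Metric.mem_ball.2 ?_, hgG⟩
    rw [dist_pi_lt_iff hr]
    intro i
    fin_cases i
    · show dist (g 0) (v 0) < r
      have h1 : (v 0 - m) / θ - ((a' : ℝ) + b' * α) = (v 0 - g 0) / θ := by
        simp only [hg, Matrix.cons_val_zero]
        field_simp
        ring
      rw [h1, abs_div] at hab
      have h2 : |v 0 - g 0| < r := by
        have h3 := mul_lt_mul_of_pos_right hab hθabs
        rw [div_mul_cancel₀ _ (ne_of_gt hθabs), div_mul_cancel₀ _ (ne_of_gt hθabs)] at h3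
        exact h3
      rw [Real.dist_eq, abs_sub_comm]
      exact h2
    · show dist (g 1) (v 1) < r
      rw [Real.dist_eq, abs_sub_comm, hg]
      simpa using hmn
  · -- the set equality
    have hGset : ∀ u : Fin 2 → ℝ, u ∈ (G : Set (Fin 2 → ℝ)) ↔ Pred α β θ (u 0) (u 1) :=
      fun u => Iff.rfl
    refine Set.Subset.antisymm ?_ ?_
    · -- IG G ⊆ powers
      rintro B ⟨hu, ⟨a, b, ha, hb, hform⟩, himg⟩
      have fwd : ∀ u, u ∈ (G : Set (Fin 2 → ℝ)) →
          Matrix.vecMul u B ∈ (G : Set (Fin 2 → ℝ)) := by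
        intro u hu'
        rw [← himg]
        exact ⟨u, hu', rfl⟩
      have bwd : ∀ w, w ∈ (G : Set (Fin 2 → ℝ)) →
          ∃ u, u ∈ (G : Set (Fin 2 → ℝ)) ∧ Matrix.vecMul u B = w := by
        intro w hw
        rw [← himg] at hw
        exact hw
      rcases hform with rfl | rfl
      · -- diagonal case
        have hpab : Pred α β θ a b := by
          have h := fwd _ hG11
          have h' : Pred α β θ (Matrix.vecMul ![1, 1] (Matrix.of ![![a, 0], ![0, b]]) 0)
              (Matrix.vecMul ![1, 1] (Matrix.of ![![a, 0], ![0, b]]) 1) := (hGset _).1 h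
          have e0 : Matrix.vecMul ![1, 1] (Matrix.of ![![a, 0], ![0, b]]) 0 = a := by
            rw [vecMul_two]; simp
          have e1 : Matrix.vecMul ![1, 1] (Matrix.of ![![a, 0], ![0, b]]) 1 = b := by
            rw [vecMul_two]; simp
          rwa [e0, e1] at h'
        have hpinv : Pred α β θ a⁻¹ b⁻¹ := by
          obtain ⟨u, huG, hueq⟩ := bwd _ hG11
          have h0 := congrFun hueq 0
          have h1 := congrFun hueq 1
          rw [vecMul_two] at h0 h1
          simp at h0 h1
          have hu0 : u 0 = a⁻¹ := eq_inv_of_mul_eq_one_left h0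
          have hu1 : u 1 = b⁻¹ := eq_inv_of_mul_eq_one_left h1
          have h' : Pred α β θ (u 0) (u 1) := (hGset _).1 huG
          rwa [hu0, hu1] at h'
        obtain ⟨p, q, r, N, e1, e2⟩ := hpab
        obtain ⟨p', q', r', M, f1, f2⟩ := hpinv
        have hprod1 : (aeval α p + θ * aeval α q) * (aeval α p' + θ * aeval α q')
            = α ^ (N + M) := by
          rw [← e1, ← f1, pow_add]
          field_simp
        obtain ⟨c0, c1, c2, -, -⟩ := indep5 R θ hθ
          (aeval α p * aeval α p' - α ^ (N + M))
          (aeval α p * aeval α q' + aeval α q * aeval α p')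
          (aeval α q * aeval α q') 0 0
          (sub_mem (mul_mem (hmem α hαmem p) (hmem α hαmem p')) (pow_mem hαmem _))
          (add_mem (mul_mem (hmem α hαmem p) (hmem α hαmem q'))
            (mul_mem (hmem α hαmem q) (hmem α hαmem p')))
          (mul_mem (hmem α hαmem q) (hmem α hαmem q')) (zero_mem R) (zero_mem R)
          (by linear_combination hprod1)
        have hpp' : p * p' = X ^ (N + M) := by
          apply int_aeval_inj htr
          rw [map_mul, map_pow, aeval_X]
          linarith [c0]
        obtain ⟨s, hsk, hsign⟩ := mul_eq_X_pow p p' (N + M) hpp'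
        rcases hsign with ⟨hp, hp'⟩ | ⟨hp, hp'⟩
        · -- positive sign
          rw [hp] at e1 e2
          rw [hp'] at f2
          simp only [map_pow, aeval_X] at e1 e2 f2
          have hq0 : aeval α q = 0 := by
            rcases mul_eq_zero.1 c2 with h | h
            · exact h
            · rw [h, mul_zero, zero_add, hp'] at c1
              simp only [map_pow, aeval_X] at c1
              exact (mul_eq_zero.1 c1).resolve_right (pow_ne_zero _ hαne)
          rw [hq0, mul_zero, add_zero] at e1
          -- second coordinate
          have hprod2 : (β ^ s + θ ^ 2 * aeval β r) * (β ^ (N + M - s) + θ ^ 2 * aeval β r')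
              = β ^ (N + M) := by
            rw [← e2, ← f2, pow_add]
            field_simp
          have hss : β ^ s * β ^ (N + M - s) = β ^ (N + M) := by
            rw [← pow_add, Nat.add_sub_cancel' hsk]
          obtain ⟨-, -, d2, -, d4⟩ := indep5 R θ hθ
            (β ^ s * β ^ (N + M - s) - β ^ (N + M))
            0
            (β ^ s * aeval β r' + aeval β r * β ^ (N + M - s))
            0
            (aeval β r * aeval β r')
            (sub_mem (mul_mem (pow_mem hβmem _) (pow_mem hβmem _)) (pow_mem hβmem _))
            (zero_mem R)
            (add_mem (mul_mem (pow_mem hβmem _) (hmem β hβmem r'))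
              (mul_mem (hmem β hβmem r) (pow_mem hβmem _)))
            (zero_mem R)
            (mul_mem (hmem β hβmem r) (hmem β hβmem r'))
            (by linear_combination hprod2)
          have hr0 : aeval β r = 0 := by
            rcases mul_eq_zero.1 d4 with h | h
            · exact h
            · rw [h, mul_zero, zero_add] at d2
              exact (mul_eq_zero.1 d2).resolve_right (pow_ne_zero _ hβne)
          rw [hr0, mul_zero, add_zero] at e2
          refine ⟨(s : ℤ) - (N : ℤ), ?_⟩
          have haeq : a = α ^ ((s : ℤ) - (N : ℤ)) := by
            rw [zpow_sub₀ hαne, zpow_natCast, zpow_natCast]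
            exact (eq_div_iff (pow_ne_zero _ hαne)).2 e1
          have hbeq : b = β ^ ((s : ℤ) - (N : ℤ)) := by
            rw [zpow_sub₀ hβne, zpow_natCast, zpow_natCast]
            exact (eq_div_iff (pow_ne_zero _ hβne)).2 e2
          rw [haeq, hbeq]
        · -- negative sign : contradiction with positivity
          exfalso
          rw [hp] at e1
          simp only [map_neg, map_pow, aeval_X] at e1
          have hq0 : aeval α q = 0 := by
            rcases mul_eq_zero.1 c2 with h | h
            · exact h
            · rw [h, mul_zero, zero_add, hp'] at c1
              simp only [map_neg, map_pow, aeval_X, mul_neg, neg_eq_zero] at c1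
              exact (mul_eq_zero.1 c1).resolve_right (pow_ne_zero _ hαne)
          rw [hq0, mul_zero, add_zero] at e1
          nlinarith [pow_pos hα s, mul_pos ha (pow_pos hα N)]
      · -- antidiagonal case : impossible
        exfalso
        have m1 : Pred α β θ b a := by
          have h := fwd _ hG11
          have h' : Pred α β θ (Matrix.vecMul ![1, 1] (Matrix.of ![![0, a], ![b, 0]]) 0)
              (Matrix.vecMul ![1, 1] (Matrix.of ![![0, a], ![b, 0]]) 1) := (hGset _).1 h
          have e0 : Matrix.vecMul ![1, 1] (Matrix.of ![![0, a], ![b, 0]]) 0 = b := by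
            rw [vecMul_two]; simp
          have e1 : Matrix.vecMul ![1, 1] (Matrix.of ![![0, a], ![b, 0]]) 1 = a := by
            rw [vecMul_two]; simp
          rwa [e0, e1] at h'
        have m2 : Pred α β θ a⁻¹ b⁻¹ := by
          obtain ⟨u, huG, hueq⟩ := bwd _ hG11
          have h0 := congrFun hueq 0
          have h1 := congrFun hueq 1
          rw [vecMul_two] at h0 h1
          simp at h0 h1
          have hu0 : u 0 = a⁻¹ := eq_inv_of_mul_eq_one_left h1
          have hu1 : u 1 = b⁻¹ := eq_inv_of_mul_eq_one_left h0
          have h' : Pred α β θ (u 0) (u 1) := (hGset _).1 huG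
          rwa [hu0, hu1] at h'
        have m3G : (![θ, 0] : Fin 2 → ℝ) ∈ (G : Set (Fin 2 → ℝ)) := by
          rw [hGset]
          simpa using Pred_theta α β θ
        have m4 : Pred α β θ 0 (θ * a) := by
          have h := fwd _ m3G
          have h' : Pred α β θ (Matrix.vecMul ![θ, 0] (Matrix.of ![![0, a], ![b, 0]]) 0)
              (Matrix.vecMul ![θ, 0] (Matrix.of ![![0, a], ![b, 0]]) 1) := (hGset _).1 h
          have e0 : Matrix.vecMul ![θ, 0] (Matrix.of ![![0, a], ![b, 0]]) 0 = 0 := by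
            rw [vecMul_two]; simp
          have e1 : Matrix.vecMul ![θ, 0] (Matrix.of ![![0, a], ![b, 0]]) 1 = θ * a := by
            rw [vecMul_two]; simp
          rwa [e0, e1] at h'
        obtain ⟨p1, q1, r1, N1, e1, e2⟩ := m1
        obtain ⟨p2, q2, r2, N2, f1, f2⟩ := m2
        obtain ⟨p3, q3, r3, N3, g1, g2⟩ := m4
        have hprod : (aeval β p1 + θ ^ 2 * aeval β r1) * (aeval α p2 + θ * aeval α q2)
            = β ^ N1 * α ^ N2 := by
          rw [← e2, ← f1]
          field_simp
        obtain ⟨cc0, -, -, -, -⟩ := indep5 R θ hθ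
          (aeval β p1 * aeval α p2 - β ^ N1 * α ^ N2)
          (aeval β p1 * aeval α q2)
          (aeval β r1 * aeval α p2)
          (aeval β r1 * aeval α q2)
          0
          (sub_mem (mul_mem (hmem β hβmem p1) (hmem α hαmem p2))
            (mul_mem (pow_mem hβmem _) (pow_mem hαmem _)))
          (mul_mem (hmem β hβmem p1) (hmem α hαmem q2))
          (mul_mem (hmem β hβmem r1) (hmem α hαmem p2))
          (mul_mem (hmem β hβmem r1) (hmem α hαmem q2))
          (zero_mem R)
          (by linear_combination hprod)
        have hP1ne : aeval β p1 ≠ 0 := by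
          intro h
          have hpe : aeval β p1 * aeval α p2 = β ^ N1 * α ^ N2 := by linarith [cc0]
          rw [h, zero_mul] at hpe
          have := mul_pos (pow_pos hβ N1) (pow_pos hα N2)
          linarith
        obtain ⟨-, dd1, -, -, -⟩ := indep5 R θ hθ
          (β ^ N1 * aeval β p3)
          (-(β ^ N3 * aeval β p1))
          (β ^ N1 * aeval β r3)
          (-(β ^ N3 * aeval β r1))
          0
          (mul_mem (pow_mem hβmem _) (hmem β hβmem p3))
          (neg_mem (mul_mem (pow_mem hβmem _) (hmem β hβmem p1)))
          (mul_mem (pow_mem hβmem _) (hmem β hβmem r3))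
          (neg_mem (mul_mem (pow_mem hβmem _) (hmem β hβmem r1)))
          (zero_mem R)
          (by linear_combination θ * β ^ N3 * e2 - β ^ N1 * g2)
        apply hP1ne
        have : β ^ N3 * aeval β p1 = 0 := by linarith [dd1]
        exact (mul_eq_zero.1 this).resolve_left (pow_ne_zero _ hβne)
    · -- powers ⊆ IG G
      rintro B ⟨n, rfl⟩
      refine ⟨?_, ⟨α ^ n, β ^ n, zpow_pos hα n, zpow_pos hβ n, Or.inl rfl⟩, ?_⟩
      · rw [Matrix.isUnit_iff_isUnit_det, Matrix.det_fin_two_of]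
        refine isUnit_iff_ne_zero.2 ?_
        have h1 : (0:ℝ) < α ^ n := zpow_pos hα n
        have h2 : (0:ℝ) < β ^ n := zpow_pos hβ n
        nlinarith
      · ext w
        constructor
        · rintro ⟨u, hu', rfl⟩
          have h0 : Matrix.vecMul u (Matrix.of ![![α ^ n, 0], ![0, β ^ n]]) 0
              = α ^ n * u 0 := by rw [vecMul_two]; simp; ring
          have h1 : Matrix.vecMul u (Matrix.of ![![α ^ n, 0], ![0, β ^ n]]) 1
              = β ^ n * u 1 := by rw [vecMul_two]; simp; ring
          show Pred α β θ (Matrix.vecMul u (Matrix.of ![![α ^ n, 0], ![0, β ^ n]]) 0)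
            (Matrix.vecMul u (Matrix.of ![![α ^ n, 0], ![0, β ^ n]]) 1)
          rw [h0, h1]
          exact Pred_scale α β θ hαne hβne n _ _ ((hGset _).1 hu')
        · intro hw
          refine ⟨![α ^ (-n) * w 0, β ^ (-n) * w 1], ?_, ?_⟩
          · rw [hGset]
            have := Pred_scale α β θ hαne hβne (-n) _ _ ((hGset _).1 hw)
            simpa using this
          · funext j
            fin_cases j
            · show Matrix.vecMul _ _ 0 = w 0
              rw [vecMul_two]
              simp [zpow_neg]
              field_simp
            · show Matrix.vecMul _ _ 1 = w 1
              rw [vecMul_two]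
              simp [zpow_neg]
              field_simp
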